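/- Let (a,b) be a perplex parameter with identity 𝟙 = (1/(a₁b₂ − a₂b₁))·(b₂, −b₁). An element x = (x₁,x₂) ∈ ℝ² is NOT invertible for * (i.e., there is no y with x*y = 𝟙) if and only if x₁²(a₁b₂ − a₂b₁) + x₁x₂(a₁b₃ − a₃b₁) + x₂²(a₂b₃ − a₃b₂) = 0. -/

import Mathlib

open Filter Topology

noncomputable section

/-- The perplex product on `ℝ²` determined by the parameters `a = (a₁,a₂,a₃)`,
`b = (b₁,b₂,b₃)`. -/
def pmul (a₁ a₂ a₃ b₁ b₂ b₃ : ℝ) (x y : ℝ × ℝ) : ℝ × ℝ :=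
  (a₁ * x.1 * y.1 + a₂ * (x.1 * y.2 + x.2 * y.1) + a₃ * x.2 * y.2,
   b₁ * x.1 * y.1 + b₂ * (x.1 * y.2 + x.2 * y.1) + b₃ * x.2 * y.2)

/-- `(a,b)` is a perplex parameter: conditions (i)-(iv). -/
def IsPerplexParam (a₁ a₂ a₃ b₁ b₂ b₃ : ℝ) : Prop :=
  a₁ * a₃ - a₂ ^ 2 ≠ 0 ∧ a₁ * b₂ - a₂ * b₁ ≠ 0 ∧
    a₂ * b₂ - a₃ * b₁ = 0 ∧ a₁ * a₃ - a₂ ^ 2 + a₂ * b₃ - a₃ * b₂ = 0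

/-- The multiplicative identity `𝟙` of the perplex algebra. -/
def pone (a₁ a₂ b₁ b₂ : ℝ) : ℝ × ℝ :=
  (1 / (a₁ * b₂ - a₂ * b₁)) • ((b₂, -b₁) : ℝ × ℝ)


/-- auxiliary: `b₂² - b₁b₃ = a₁b₂ - a₂b₁` for perplex parameters. -/
theorem pK_aux (a₁ a₂ a₃ b₁ b₂ b₃ : ℝ) (hA : a₁ * a₃ - a₂ ^ 2 ≠ 0)
    (hp3 : a₂ * b₂ - a₃ * b₁ = 0) (hp4 : a₁ * a₃ - a₂ ^ 2 + a₂ * b₃ - a₃ * b₂ = 0) :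
    b₂ ^ 2 - b₁ * b₃ = a₁ * b₂ - a₂ * b₁ := by
  rcases eq_or_ne a₂ 0 with h2 | h2
  · subst h2
    have ha3 : a₃ ≠ 0 := fun h => hA (by rw [h]; ring)
    have hb1 : b₁ = 0 := by
      have h3 : a₃ * b₁ = 0 := by linarith
      rcases mul_eq_zero.mp h3 with h | h
      · exact absurd h ha3
      · exact h
    have hb2 : b₂ = a₁ := by
      have h4 : a₃ * (a₁ - b₂) = 0 := by ring_nf; linarith [hp4]
      rcases mul_eq_zero.mp h4 with h | h
      · exact absurd h ha3
      · linarith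
    rw [hb1, hb2]; ring
  · have h : a₂ * (b₂ ^ 2 - b₁ * b₃) = a₂ * (a₁ * b₂ - a₂ * b₁) := by
      linear_combination (b₂ - a₁) * hp3 - b₁ * hp4
    exact mul_left_cancel₀ h2 h

/-- auxiliary: the mixed associativity identity `(x*y)*v = (x*v)*y`. -/
theorem passoc_aux (a₁ a₂ a₃ b₁ b₂ b₃ : ℝ)
    (hp3 : a₂ * b₂ - a₃ * b₁ = 0) (hp4 : a₁ * a₃ - a₂ ^ 2 + a₂ * b₃ - a₃ * b₂ = 0)
    (hK : b₂ ^ 2 - b₁ * b₃ = a₁ * b₂ - a₂ * b₁) (x y v : ℝ × ℝ) :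
    pmul a₁ a₂ a₃ b₁ b₂ b₃ (pmul a₁ a₂ a₃ b₁ b₂ b₃ x y) v =
      pmul a₁ a₂ a₃ b₁ b₂ b₃ (pmul a₁ a₂ a₃ b₁ b₂ b₃ x v) y := by
  unfold pmul
  ext
  · simp only
    linear_combination (x.1 * y.2 * v.1 - x.1 * y.1 * v.2) * hp3 +
      (x.2 * y.2 * v.1 - x.2 * y.1 * v.2) * hp4
  · simp only
    linear_combination (-(x.2 * y.2 * v.1) + x.2 * y.1 * v.2) * hp3 +
      (x.1 * y.2 * v.1 - x.1 * y.1 * v.2) * hK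

/-- auxiliary: `pone` is a left identity. -/
theorem pone_mul_aux (a₁ a₂ a₃ b₁ b₂ b₃ : ℝ) (hD : a₁ * b₂ - a₂ * b₁ ≠ 0)
    (hp3 : a₂ * b₂ - a₃ * b₁ = 0)
    (hK : b₂ ^ 2 - b₁ * b₃ = a₁ * b₂ - a₂ * b₁) (z : ℝ × ℝ) :
    pmul a₁ a₂ a₃ b₁ b₂ b₃ (pone a₁ a₂ b₁ b₂) z = z := by
  unfold pmul pone
  ext
  · simp only [Prod.smul_fst, Prod.smul_snd, smul_eq_mul]
    field_simp
    linear_combination z.2 * hp3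
  · simp only [Prod.smul_fst, Prod.smul_snd, smul_eq_mul]
    field_simp
    rw [div_eq_iff (by contrapose! hD; linarith)]
    linear_combination z.2 * hK

/-- An element `x` is not invertible for `*` iff the displayed conic form
vanishes at `x`. -/
theorem not_invertible_iff (a₁ a₂ a₃ b₁ b₂ b₃ : ℝ)
    (hp : IsPerplexParam a₁ a₂ a₃ b₁ b₂ b₃) (x : ℝ × ℝ) :
    (¬ ∃ y : ℝ × ℝ, pmul a₁ a₂ a₃ b₁ b₂ b₃ x y = pone a₁ a₂ b₁ b₂) ↔
      x.1 ^ 2 * (a₁ * b₂ - a₂ * b₁) + x.1 * x.2 * (a₁ * b₃ - a₃ * b₁) +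
        x.2 ^ 2 * (a₂ * b₃ - a₃ * b₂) = 0 := by
  obtain ⟨hA, hD, hp3, hp4⟩ := hp
  have hK : b₂ ^ 2 - b₁ * b₃ = a₁ * b₂ - a₂ * b₁ := pK_aux _ _ _ _ _ _ hA hp3 hp4
  constructor
  · intro h
    by_contra hQ
    apply h
    refine ⟨(((b₂ * x.1 + b₃ * x.2) * b₂ + (a₂ * x.1 + a₃ * x.2) * b₁) / ((a₁ * b₂ - a₂ * b₁) * (x.1 ^ 2 * (a₁ * b₂ - a₂ * b₁) + x.1 * x.2 * (a₁ * b₃ - a₃ * b₁) + x.2 ^ 2 * (a₂ * b₃ - a₃ * b₂))), (-((a₁ * x.1 + a₂ * x.2) * b₁) - (b₁ * x.1 + b₂ * x.2) * b₂) / ((a₁ * b₂ - a₂ * b₁) * (x.1 ^ 2 * (a₁ * b₂ - a₂ * b₁) + x.1 * x.2 * (a₁ * b₃ - a₃ * b₁) + x.2 ^ 2 * (a₂ * b₃ - a₃ * b₂)))), ?_⟩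
    unfold pmul pone
    ext
    · simp only [Prod.smul_fst, Prod.smul_snd, smul_eq_mul]
      field_simp
      rw [div_eq_iff (by contrapose! hQ; linear_combination hQ)]
      ring
    · simp only [Prod.smul_fst, Prod.smul_snd, smul_eq_mul]
      field_simp
      rw [div_eq_iff (mul_ne_zero (by contrapose! hD; linarith) (by contrapose! hQ; linear_combination hQ))]
      linear_combination (b₁ * (x.1 ^ 2 * (a₁ * b₂ - a₂ * b₁) + x.1 * x.2 * (a₁ * b₃ - a₃ * b₁) + x.2 ^ 2 * (a₂ * b₃ - a₃ * b₂))) * mul_inv_cancel₀ hD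
  · intro hQ
    rintro ⟨y, hy⟩
    set v : ℝ × ℝ := (a₂ * x.1 + a₃ * x.2, -(a₁ * x.1 + a₂ * x.2)) with hv
    have hxv : pmul a₁ a₂ a₃ b₁ b₂ b₃ x v = (0, 0) := by
      unfold pmul
      rw [hv]
      ext
      · simp only; ring
      · simp only; linear_combination -hQ
    have hv0 : v = (0, 0) := by
      calc v = pmul a₁ a₂ a₃ b₁ b₂ b₃ (pone a₁ a₂ b₁ b₂) v :=
            (pone_mul_aux _ _ _ _ _ _ hD hp3 hK v).symm
        _ = pmul a₁ a₂ a₃ b₁ b₂ b₃ (pmul a₁ a₂ a₃ b₁ b₂ b₃ x y) v := by rw [hy]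
        _ = pmul a₁ a₂ a₃ b₁ b₂ b₃ (pmul a₁ a₂ a₃ b₁ b₂ b₃ x v) y :=
            passoc_aux _ _ _ _ _ _ hp3 hp4 hK x y v
        _ = pmul a₁ a₂ a₃ b₁ b₂ b₃ (0, 0) y := by rw [hxv]
        _ = (0, 0) := by unfold pmul; simp
    have hq0 : a₂ * x.1 + a₃ * x.2 = 0 := congrArg Prod.fst hv0
    have hP0 : a₁ * x.1 + a₂ * x.2 = 0 := by
      have := congrArg Prod.snd hv0
      simp only [hv] at this
      linarith [this]
    have hx1 : x.1 = 0 := by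
      have h : (a₁ * a₃ - a₂ ^ 2) * x.1 = 0 := by linear_combination a₃ * hP0 - a₂ * hq0
      exact (mul_eq_zero.mp h).resolve_left hA
    have hx2 : x.2 = 0 := by
      have h : (a₁ * a₃ - a₂ ^ 2) * x.2 = 0 := by linear_combination a₁ * hq0 - a₂ * hP0
      exact (mul_eq_zero.mp h).resolve_left hA
    have h1 : (0 : ℝ) = 1 / (a₁ * b₂ - a₂ * b₁) * b₂ := by
      have := congrArg Prod.fst hy
      simp only [pmul, pone, Prod.smul_fst, smul_eq_mul, hx1, hx2] at this
      linarith [this]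
    have h2 : (0 : ℝ) = 1 / (a₁ * b₂ - a₂ * b₁) * (-b₁) := by
      have := congrArg Prod.snd hy
      simp only [pmul, pone, Prod.smul_snd, smul_eq_mul, hx1, hx2] at this
      linarith [this]
    apply hD
    have hb2 : b₂ = 0 := by
      field_simp at h1
      linarith
    have hb1 : b₁ = 0 := by
      field_simp at h2
      linarith
    rw [hb1, hb2]; ring
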